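/- (Classification of best approximations) Let K be a field and α ∈ K((T)) with a continued fraction datum (αₙ, aₙ) and canonical convergents (pₙ, qₙ). Let p, q ∈ K[X] with q ≠ 0 be a best approximation of α, i.e. for all p', q' ∈ K[X] with q' ≠ 0: if orderTop(ι p' − α·ι q') ≥ orderTop(ι p − α·ι q) and deg q' ≤ deg q, then p'·q = p·q'. Then there exist a unique n ∈ ℕ and a polynomial r ∈ K[X] with r ≠ 0 and deg r < deg aₙ₊₁ such that p = r·pₙ and q = r·qₙ. In particular, if p and q are coprime then r is a nonzero constant. -/

import Mathlib

open Polynomial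

/-- The ring homomorphism `K[X] → K((T))` sending `X` to `T⁻¹`. -/
noncomputable def iota {K : Type*} [Field K] : Polynomial K →+* LaurentSeries K :=
  Polynomial.eval₂RingHom (HahnSeries.C : K →+* LaurentSeries K)
    (HahnSeries.single (-1 : ℤ) (1 : K))

namespace BestApproxAux
open HahnSeries
variable {K : Type*} [Field K]


lemma iota_C (c : K) : iota (Polynomial.C c) = HahnSeries.single (0:ℤ) c := by
  simp [iota, HahnSeries.C_apply]

lemma iota_X : iota (Polynomial.X : Polynomial K) = HahnSeries.single (-1:ℤ) 1 := by
  simp [iota]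

lemma orderTop_iota {f : Polynomial K} (hf : f ≠ 0) :
    (iota f).orderTop = ((-(f.natDegree : ℤ) : ℤ) : WithTop ℤ) := by
  suffices H : ∀ (d : ℕ) (f : Polynomial K), f ≠ 0 → f.natDegree = d →
      (iota f).orderTop = ((-(f.natDegree : ℤ) : ℤ) : WithTop ℤ) from H _ f hf rfl
  clear hf f
  intro d
  induction d using Nat.strong_induction_on with
  | _ d ih =>
  intro f hf hd
  subst hd
  have hlead : f.leadingCoeff ≠ 0 := Polynomial.leadingCoeff_ne_zero.mpr hf
  have key : iota f
      = HahnSeries.single (-(f.natDegree:ℤ)) f.leadingCoeff + iota f.eraseLead := by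
    conv_lhs => rw [← Polynomial.eraseLead_add_C_mul_X_pow f]
    rw [map_add, map_mul, map_pow, iota_C, iota_X, add_comm]
    congr 1
    rw [HahnSeries.single_pow, HahnSeries.single_mul_single]
    simp
  by_cases he : f.eraseLead = 0
  · rw [key, he, map_zero, add_zero, HahnSeries.orderTop_single hlead]
  · have hlt : f.eraseLead.natDegree < f.natDegree := by
      rcases Polynomial.eraseLead_natDegree_lt_or_eraseLead_eq_zero f with h | h
      · exact h
      · exact absurd h he
    have horder : (iota f.eraseLead).orderTop = ((-(f.eraseLead.natDegree : ℤ) : ℤ) : WithTop ℤ) :=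
      ih _ hlt _ he rfl
    rw [key, HahnSeries.orderTop_add_eq_left]
    · exact HahnSeries.orderTop_single hlead
    · rw [HahnSeries.orderTop_single hlead, horder]
      exact_mod_cast neg_lt_neg (by exact_mod_cast hlt)

lemma iota_ne_zero {f : Polynomial K} (hf : f ≠ 0) : iota f ≠ 0 := by
  intro h
  have := orderTop_iota hf
  rw [h, HahnSeries.orderTop_zero] at this
  exact (WithTop.top_ne_coe) this

lemma orderTop_mul' {x y : LaurentSeries K} (hx : x ≠ 0) (hy : y ≠ 0) :
    (x * y).orderTop = x.orderTop + y.orderTop := by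
  rw [← HahnSeries.order_eq_orderTop_of_ne_zero hx, ← HahnSeries.order_eq_orderTop_of_ne_zero hy,
      ← HahnSeries.order_eq_orderTop_of_ne_zero (mul_ne_zero hx hy), HahnSeries.order_mul hx hy]
  exact_mod_cast rfl


structure CF (K : Type*) [Field K] where
  α : LaurentSeries K
  A : ℕ → LaurentSeries K
  a : ℕ → Polynomial K
  p : ℕ → Polynomial K
  q : ℕ → Polynomial K
  h0 : A 0 = α
  hfrac : ∀ n, 0 < (A n - iota (a n)).orderTop ∧ A (n + 1) * (A n - iota (a n)) = 1
  hp0 : p 0 = a 0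
  hq0 : q 0 = 1
  hp1 : p 1 = a 1 * a 0 + 1
  hq1 : q 1 = a 1
  hprec : ∀ n, p (n + 2) = a (n + 2) * p (n + 1) + p n
  hqrec : ∀ n, q (n + 2) = a (n + 2) * q (n + 1) + q n

namespace CF
variable (D : CF K)

noncomputable def pp : ℕ → Polynomial K
  | 0 => 1
  | n+1 => D.p n

noncomputable def qq : ℕ → Polynomial K
  | 0 => 0
  | n+1 => D.q n

lemma pp_succ (n : ℕ) : D.pp (n+1) = D.p n := rfl
lemma qq_succ (n : ℕ) : D.qq (n+1) = D.q n := rfl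

lemma pp_rec (n : ℕ) : D.pp (n+2) = D.a (n+1) * D.pp (n+1) + D.pp n := by
  cases n with
  | zero => show D.p 1 = D.a 1 * D.p 0 + 1; rw [D.hp1, D.hp0]
  | succ m => show D.p (m+2) = _; rw [D.hprec m]; rfl

lemma qq_rec (n : ℕ) : D.qq (n+2) = D.a (n+1) * D.qq (n+1) + D.qq n := by
  cases n with
  | zero => show D.q 1 = D.a 1 * D.q 0 + 0; rw [D.hq1, D.hq0]; ring
  | succ m => show D.q (m+2) = _; rw [D.hqrec m]; rfl

lemma det (n : ℕ) : D.qq (n+1) * D.pp n - D.pp (n+1) * D.qq n = (-1)^n := by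
  induction n with
  | zero => show D.q 0 * 1 - D.p 0 * 0 = 1; rw [D.hq0]; ring
  | succ m ih =>
    have hp := D.pp_rec m
    have hq := D.qq_rec m
    calc D.qq (m+2) * D.pp (m+1) - D.pp (m+2) * D.qq (m+1)
        = -(D.qq (m+1) * D.pp m - D.pp (m+1) * D.qq m) := by rw [hp, hq]; ring
      _ = (-1)^(m+1) := by rw [ih]; ring



lemma a_facts (n : ℕ) : D.a (n+1) ≠ 0 ∧ 1 ≤ (D.a (n+1)).natDegree ∧
    (D.A (n+1)).orderTop = ((-((D.a (n+1)).natDegree : ℤ) : ℤ) : WithTop ℤ) := by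
  obtain ⟨hpos, heq⟩ := D.hfrac n
  obtain ⟨hpos2, -⟩ := D.hfrac (n+1)
  have hA1 : D.A (n+1) ≠ 0 := left_ne_zero_of_mul_eq_one heq
  have hdne : D.A n - iota (D.a n) ≠ 0 := right_ne_zero_of_mul_eq_one heq
  have hmul : (D.A (n+1)).orderTop + (D.A n - iota (D.a n)).orderTop = 0 := by
    rw [← orderTop_mul' hA1 hdne, heq, HahnSeries.orderTop_one]
  obtain ⟨oA, hoA⟩ : ∃ x : ℤ, (D.A (n+1)).orderTop = (x : WithTop ℤ) :=
    ⟨_, (HahnSeries.order_eq_orderTop_of_ne_zero hA1).symm⟩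
  obtain ⟨o1, ho1⟩ : ∃ x : ℤ, (D.A n - iota (D.a n)).orderTop = (x : WithTop ℤ) :=
    ⟨_, (HahnSeries.order_eq_orderTop_of_ne_zero hdne).symm⟩
  have ho1pos : 0 < o1 := by rw [ho1] at hpos; exact_mod_cast hpos
  have hsum : oA + o1 = 0 := by
    rw [hoA, ho1, ← WithTop.coe_add] at hmul; exact_mod_cast hmul
  have hoAneg : oA < 0 := by omega
  have hane : D.a (n+1) ≠ 0 := by
    intro h
    rw [h, map_zero, sub_zero, hoA] at hpos2
    have : (0:ℤ) < oA := by exact_mod_cast hpos2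
    omega
  have hIA : (iota (D.a (n+1))).orderTop = (D.A (n+1)).orderTop := by
    by_contra hne
    rcases lt_or_gt_of_ne hne with h | h
    · have hkey : (D.A (n+1) - iota (D.a (n+1))).orderTop = (iota (D.a (n+1))).orderTop := by
        rw [sub_eq_add_neg, HahnSeries.orderTop_add_eq_right, HahnSeries.orderTop_neg]
        rw [HahnSeries.orderTop_neg]; exact h
      rw [hkey] at hpos2
      have h2 : (0 : WithTop ℤ) < (D.A (n+1)).orderTop := lt_trans hpos2 h
      rw [hoA] at h2
      have : (0:ℤ) < oA := by exact_mod_cast h2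
      omega
    · have hkey : (D.A (n+1) - iota (D.a (n+1))).orderTop = (D.A (n+1)).orderTop := by
        rw [sub_eq_add_neg, HahnSeries.orderTop_add_eq_left]
        rw [HahnSeries.orderTop_neg]; exact h
      rw [hkey, hoA] at hpos2
      have : (0:ℤ) < oA := by exact_mod_cast hpos2
      omega
  have hdeg : -((D.a (n+1)).natDegree : ℤ) = oA := by
    rw [orderTop_iota hane, hoA] at hIA
    exact_mod_cast hIA
  refine ⟨hane, ?_, by rw [hoA]; exact_mod_cast hdeg.symm⟩
  omega

lemma q_facts : ∀ n, D.q n ≠ 0 ∧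
    (D.q (n+1)).natDegree = (D.a (n+1)).natDegree + (D.q n).natDegree := by
  intro n
  induction n with
  | zero =>
    refine ⟨by rw [D.hq0]; exact one_ne_zero, ?_⟩
    rw [D.hq1, D.hq0, Polynomial.natDegree_one]
    simp
  | succ m ih =>
    obtain ⟨hqm, hdm⟩ := ih
    have ha1 := (D.a_facts m).2.1
    have ha2ne := (D.a_facts (m+1)).1
    have ha2deg := (D.a_facts (m+1)).2.1
    have hqm1 : D.q (m+1) ≠ 0 := by
      intro h
      rw [h, Polynomial.natDegree_zero] at hdm
      omega
    refine ⟨hqm1, ?_⟩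
    have hmulne : D.a (m+2) * D.q (m+1) ≠ 0 := mul_ne_zero ha2ne hqm1
    have hndmul : (D.a (m+2) * D.q (m+1)).natDegree
        = (D.a (m+2)).natDegree + (D.q (m+1)).natDegree := Polynomial.natDegree_mul ha2ne hqm1
    have hlt : (D.q m).degree < (D.a (m+2) * D.q (m+1)).degree := by
      apply Polynomial.degree_lt_degree
      rw [hndmul]
      omega
    have hdeq : (D.q (m+2)).degree = (D.a (m+2) * D.q (m+1)).degree := by
      rw [D.hqrec m]
      exact Polynomial.degree_add_eq_left_of_degree_lt hlt
    rw [Polynomial.natDegree_eq_of_degree_eq hdeq, hndmul]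

lemma q_ne (n : ℕ) : D.q n ≠ 0 := (D.q_facts n).1

lemma q_mono : StrictMono (fun n => (D.q n).natDegree) := by
  apply strictMono_nat_of_lt_succ
  intro n
  have := (D.q_facts n).2
  have := (D.a_facts n).2.1
  show (D.q n).natDegree < (D.q (n+1)).natDegree
  omega


lemma A_ne (n : ℕ) : D.A (n+1) ≠ 0 := left_ne_zero_of_mul_eq_one (D.hfrac n).2

noncomputable def E (n : ℕ) : LaurentSeries K := iota (D.pp n) - D.α * iota (D.qq n)

lemma E_zero : D.E 0 = 1 := by
  show iota 1 - D.α * iota 0 = 1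
  rw [map_one, map_zero, mul_zero, sub_zero]

lemma E_succ (n : ℕ) : D.E (n+1) = iota (D.p n) - D.α * iota (D.q n) := rfl

lemma E_rec (n : ℕ) : D.E (n+2) = iota (D.a (n+1)) * D.E (n+1) + D.E n := by
  unfold E
  rw [D.pp_rec, D.qq_rec, map_add, map_mul, map_add, map_mul]
  ring

lemma E_step (n : ℕ) : D.A (n+1) * D.E (n+1) = -(D.E n) := by
  induction n with
  | zero =>
    have h := (D.hfrac 0).2
    have h0 := D.h0
    rw [D.E_zero, D.E_succ, D.hp0, D.hq0, map_one, mul_one]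
    linear_combination (-1 : LaurentSeries K) * h + D.A 1 * h0
  | succ m ih =>
    have h := (D.hfrac (m+1)).2
    have hrec := D.E_rec m
    linear_combination D.A (m+2) * hrec + D.A (m+2) * ih - D.E (m+1) * h

lemma E_ne (n : ℕ) : D.E n ≠ 0 := by
  induction n with
  | zero => rw [D.E_zero]; exact one_ne_zero
  | succ m ih =>
    intro h
    have := D.E_step m
    rw [h, mul_zero] at this
    exact ih (by rw [← neg_neg (D.E m), ← this, neg_zero])

lemma E_ord (n : ℕ) : (D.E n).orderTop = (((D.qq (n+1)).natDegree : ℤ) : WithTop ℤ) := by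
  induction n with
  | zero =>
    rw [D.E_zero, HahnSeries.orderTop_one, D.qq_succ, D.hq0, Polynomial.natDegree_one]
    simp
  | succ m ih =>
    have hA := D.a_facts m
    have h := congrArg HahnSeries.orderTop (D.E_step m)
    rw [orderTop_mul' (D.A_ne m) (D.E_ne (m+1)), HahnSeries.orderTop_neg, ih, hA.2.2] at h
    obtain ⟨x, hx⟩ : ∃ x : ℤ, (D.E (m+1)).orderTop = (x : WithTop ℤ) :=
      ⟨_, (HahnSeries.order_eq_orderTop_of_ne_zero (D.E_ne (m+1))).symm⟩
    rw [hx, ← WithTop.coe_add] at h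
    have h' : -((D.a (m+1)).natDegree : ℤ) + x = ((D.qq (m+1)).natDegree : ℤ) := by
      exact_mod_cast h
    have hq := (D.q_facts m).2
    rw [D.qq_succ] at h'
    rw [hx, D.qq_succ]
    have : x = ((D.q (m+1)).natDegree : ℤ) := by
      rw [hq]; push_cast; omega
    rw [this]


lemma key (n : ℕ) (P' Q' : Polynomial K) (hQ' : Q' ≠ 0)
    (hdeg : Q'.natDegree < (D.qq (n+2)).natDegree)
    (herr : ((((D.qq (n+1)).natDegree : ℤ) : WithTop ℤ)) < (iota P' - D.α * iota Q').orderTop) :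
    ∃ u : Polynomial K, u ≠ 0 ∧ P' = u * D.pp (n+1) ∧ Q' = u * D.qq (n+1) := by
  have hdet := D.det (n+1)
  obtain ⟨c, hc⟩ : ∃ c : Polynomial K, c = (-1)^(n+1) := ⟨_, rfl⟩
  rw [← hc] at hdet
  have hcc : c * c = 1 := by rw [hc, ← mul_pow]; norm_num
  obtain ⟨u, hu⟩ : ∃ u, u = c * (D.qq (n+2) * P' - D.pp (n+2) * Q') := ⟨_, rfl⟩
  obtain ⟨v, hv⟩ : ∃ v, v = c * (D.pp (n+1) * Q' - D.qq (n+1) * P') := ⟨_, rfl⟩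
  have hP' : P' = u * D.pp (n+1) + v * D.pp (n+2) := by
    linear_combination (-(c * P')) * hdet - P' * hcc - D.pp (n+1) * hu - D.pp (n+2) * hv
  have hQ'eq : Q' = u * D.qq (n+1) + v * D.qq (n+2) := by
    linear_combination (-(c * Q')) * hdet - Q' * hcc - D.qq (n+1) * hu - D.qq (n+2) * hv
  have hiP : iota P' = iota u * iota (D.pp (n+1)) + iota v * iota (D.pp (n+2)) := by
    rw [hP', map_add, map_mul, map_mul]
  have hiQ : iota Q' = iota u * iota (D.qq (n+1)) + iota v * iota (D.qq (n+2)) := by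
    rw [hQ'eq, map_add, map_mul, map_mul]
  have hE : iota P' - D.α * iota Q' = iota u * D.E (n+1) + iota v * D.E (n+2) := by
    simp only [E]
    linear_combination hiP - D.α * hiQ
  have hqq1 : D.qq (n+1) ≠ 0 := by rw [D.qq_succ]; exact D.q_ne n
  have hqq2 : D.qq (n+2) ≠ 0 := by rw [D.qq_succ]; exact D.q_ne (n+1)
  by_cases hv0 : v = 0
  · have hQ'' : Q' = u * D.qq (n+1) := by rw [hQ'eq, hv0, zero_mul, add_zero]
    refine ⟨u, ?_, ?_, hQ''⟩
    · intro h; rw [h, zero_mul] at hQ''; exact hQ' hQ''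
    · rw [hP', hv0, zero_mul, add_zero]
  · exfalso
    by_cases hu0 : u = 0
    · have hQ'' : Q' = v * D.qq (n+2) := by rw [hQ'eq, hu0, zero_mul, zero_add]
      have hd : Q'.natDegree = v.natDegree + (D.qq (n+2)).natDegree := by
        rw [hQ'']; exact Polynomial.natDegree_mul hv0 hqq2
      omega
    · have h1 : (u * D.qq (n+1)).natDegree = u.natDegree + (D.qq (n+1)).natDegree :=
        Polynomial.natDegree_mul hu0 hqq1
      have h2 : (v * D.qq (n+2)).natDegree = v.natDegree + (D.qq (n+2)).natDegree :=
        Polynomial.natDegree_mul hv0 hqq2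
      have hbal : u.natDegree + (D.qq (n+1)).natDegree
          = v.natDegree + (D.qq (n+2)).natDegree := by
        by_contra hne
        rcases lt_or_gt_of_ne hne with hlt | hgt
        · have hdlt : (u * D.qq (n+1)).degree < (v * D.qq (n+2)).degree :=
            Polynomial.degree_lt_degree (by omega)
          have : Q'.natDegree = (v * D.qq (n+2)).natDegree := by
            apply Polynomial.natDegree_eq_of_degree_eq
            rw [hQ'eq]
            exact Polynomial.degree_add_eq_right_of_degree_lt hdlt
          omega
        · have hdlt : (v * D.qq (n+2)).degree < (u * D.qq (n+1)).degree :=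
            Polynomial.degree_lt_degree (by omega)
          have hQd : Q'.natDegree = (u * D.qq (n+1)).natDegree := by
            apply Polynomial.natDegree_eq_of_degree_eq
            rw [hQ'eq]
            exact Polynomial.degree_add_eq_left_of_degree_lt hdlt
          -- then natDeg Q' = u + qq1 > v + qq2 ≥ qq2, contradiction with hdeg
          omega
      have ho1 : (iota u * D.E (n+1)).orderTop
          = (((-(u.natDegree : ℤ) + ((D.qq (n+2)).natDegree : ℤ)) : ℤ) : WithTop ℤ) := by
        rw [orderTop_mul' (iota_ne_zero hu0) (D.E_ne (n+1)), orderTop_iota hu0, D.E_ord (n+1),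
          ← WithTop.coe_add]
      have ho2 : (iota v * D.E (n+2)).orderTop
          = (((-(v.natDegree : ℤ) + ((D.qq (n+3)).natDegree : ℤ)) : ℤ) : WithTop ℤ) := by
        rw [orderTop_mul' (iota_ne_zero hv0) (D.E_ne (n+2)), orderTop_iota hv0, D.E_ord (n+2),
          ← WithTop.coe_add]
      have hq13 : (D.qq (n+1)).natDegree < (D.qq (n+3)).natDegree := by
        rw [D.qq_succ, D.qq_succ]
        exact D.q_mono (show n < n+2 by omega)
      have hlt12 : (-(u.natDegree : ℤ) + ((D.qq (n+2)).natDegree : ℤ))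
          < (-(v.natDegree : ℤ) + ((D.qq (n+3)).natDegree : ℤ)) := by
        have hbal' : (u.natDegree : ℤ) + ((D.qq (n+1)).natDegree : ℤ)
            = (v.natDegree : ℤ) + ((D.qq (n+2)).natDegree : ℤ) := by exact_mod_cast hbal
        omega
      have hsum : (iota P' - D.α * iota Q').orderTop
          = (((-(u.natDegree : ℤ) + ((D.qq (n+2)).natDegree : ℤ)) : ℤ) : WithTop ℤ) := by
        rw [hE, HahnSeries.orderTop_add_eq_left, ho1]
        rw [ho1, ho2]
        exact_mod_cast hlt12
      rw [hsum] at herr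
      have herr' : ((D.qq (n+1)).natDegree : ℤ)
          < -(u.natDegree : ℤ) + ((D.qq (n+2)).natDegree : ℤ) := by exact_mod_cast herr
      have hbal' : (u.natDegree : ℤ) + ((D.qq (n+1)).natDegree : ℤ)
          = (v.natDegree : ℤ) + ((D.qq (n+2)).natDegree : ℤ) := by exact_mod_cast hbal
      omega


lemma coprime (n : ℕ) : IsCoprime (D.p n) (D.q n) := by
  have hdet := D.det (n+1)
  obtain ⟨c, hc⟩ : ∃ c : Polynomial K, c = (-1)^(n+1) := ⟨_, rfl⟩
  rw [← hc] at hdet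
  have hcc : c * c = 1 := by rw [hc, ← mul_pow]; norm_num
  have hdet' : D.q (n+1) * D.p n - D.p (n+1) * D.q n = c := hdet
  exact ⟨c * D.q (n+1), -(c * D.p (n+1)), by linear_combination c * hdet' + hcc⟩

end CF
end BestApproxAux

open BestApproxAux

/-- Classification of best approximations: every best approximation `(P, Q)` of `α` is of the
form `(r pₙ, r qₙ)` for a unique index `n` and some nonzero `r` with `deg r < deg aₙ₊₁`;
if `P, Q` are coprime then `r` is a nonzero constant. -/
theorem best_approximation_classification {K : Type*} [Field K]
    (α : LaurentSeries K)
    -- continued fraction datum: complete quotients `A` and partial quotients `a`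
    (A : ℕ → LaurentSeries K) (a : ℕ → Polynomial K)
    (h0 : A 0 = α)
    (hfrac : ∀ n, 0 < (A n - iota (a n)).orderTop ∧ A (n + 1) * (A n - iota (a n)) = 1)
    -- canonical convergents
    (p q : ℕ → Polynomial K)
    (hp0 : p 0 = a 0) (hq0 : q 0 = 1)
    (hp1 : p 1 = a 1 * a 0 + 1) (hq1 : q 1 = a 1)
    (hprec : ∀ n, p (n + 2) = a (n + 2) * p (n + 1) + p n)
    (hqrec : ∀ n, q (n + 2) = a (n + 2) * q (n + 1) + q n)
    -- a best approximation (P, Q)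
    (P Q : Polynomial K) (hQ : Q ≠ 0)
    (hbest : ∀ p' q' : Polynomial K, q' ≠ 0 →
      (iota P - α * iota Q).orderTop ≤ (iota p' - α * iota q').orderTop →
      q'.natDegree ≤ Q.natDegree → p' * Q = P * q') :
    (∃! n : ℕ, ∃ r : Polynomial K, r ≠ 0 ∧ r.degree < (a (n + 1)).degree ∧
      P = r * p n ∧ Q = r * q n) ∧
    (IsCoprime P Q → ∀ (n : ℕ) (r : Polynomial K), P = r * p n → Q = r * q n →
      ∃ c : K, c ≠ 0 ∧ r = Polynomial.C c) := by
  have part2 : IsCoprime P Q → ∀ (n : ℕ) (r : Polynomial K), P = r * p n → Q = r * q n →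
      ∃ c : K, c ≠ 0 ∧ r = Polynomial.C c := by
    intro hcop n r hPr hQr
    have hru : IsUnit r := hcop.isUnit_of_dvd' ⟨p n, hPr⟩ ⟨q n, hQr⟩
    obtain ⟨c, hcu, hcr⟩ := Polynomial.isUnit_iff.mp hru
    exact ⟨c, hcu.ne_zero, hcr.symm⟩
  let D : CF K := ⟨α, A, a, p, q, h0, hfrac, hp0, hq0, hp1, hq1, hprec, hqrec⟩
  -- find the index n
  have hfind : ∃ m, Q.natDegree < (q m).natDegree := by
    refine ⟨Q.natDegree + 1, ?_⟩
    have h1 : Q.natDegree + 1 ≤ (q (Q.natDegree + 1)).natDegree := D.q_mono.le_apply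
    omega
  have hNspec := Nat.find_spec hfind
  have hN1 : Nat.find hfind ≠ 0 := by
    intro h
    rw [h] at hNspec
    have : (q 0).natDegree = 0 := by rw [hq0, Polynomial.natDegree_one]
    omega
  obtain ⟨n, hn⟩ := Nat.exists_eq_succ_of_ne_zero hN1
  have hupper : Q.natDegree < (q (n+1)).natDegree := by rw [hn] at hNspec; exact hNspec
  have hlower : (q n).natDegree ≤ Q.natDegree := by
    have := Nat.find_min hfind (m := n) (by omega)
    omega
  -- the error of (P,Q) is at most deg q (n+1)
  have herrle : (iota P - α * iota Q).orderTop ≤ ((((q (n+1)).natDegree : ℤ)) : WithTop ℤ) := by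
    by_contra hgt
    push_neg at hgt
    have hq12 : (q (n+1)).natDegree < (q (n+2)).natDegree := D.q_mono (by omega)
    obtain ⟨u, hu0, hPu, hQu⟩ := D.key (n+1) P Q hQ
      (show Q.natDegree < (q (n+2)).natDegree by omega)
      (show ((((q (n+1)).natDegree : ℤ)) : WithTop ℤ) < (iota P - D.α * iota Q).orderTop
        from hgt)
    have hQu' : Q = u * q (n+1) := hQu
    have : Q.natDegree = u.natDegree + (q (n+1)).natDegree := by
      rw [hQu']; exact Polynomial.natDegree_mul hu0 (D.q_ne (n+1))
    omega
  -- the convergent error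
  have hconv : (iota (p n) - α * iota (q n)).orderTop = ((((q (n+1)).natDegree : ℤ)) : WithTop ℤ) :=
    D.E_ord (n+1)
  -- apply best approximation property to the convergent
  have happly : p n * Q = P * q n := by
    apply hbest (p n) (q n) (D.q_ne n) _ hlower
    rw [hconv]
    exact herrle
  have hcop : IsCoprime (q n) (p n) := (D.coprime n).symm
  have hdvd : q n ∣ Q :=
    hcop.dvd_of_dvd_mul_left ⟨P, by linear_combination happly⟩
  obtain ⟨r, hr⟩ := hdvd
  have hr0 : r ≠ 0 := by intro h; rw [h, mul_zero] at hr; exact hQ hr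
  have hQr : Q = r * q n := by rw [hr]; ring
  have hPr : P = r * p n := by
    have h2 : (r * p n) * q n = P * q n := by
      rw [hr] at happly
      linear_combination happly
    exact (mul_right_cancel₀ (D.q_ne n) h2).symm
  have hQdeg : Q.natDegree = r.natDegree + (q n).natDegree := by
    rw [hQr]; exact Polynomial.natDegree_mul hr0 (D.q_ne n)
  have hqfact : (q (n+1)).natDegree = (a (n+1)).natDegree + (q n).natDegree := (D.q_facts n).2
  have hrdeg : r.degree < (a (n+1)).degree := by
    rw [Polynomial.degree_eq_natDegree hr0, Polynomial.degree_eq_natDegree (D.a_facts n).1]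
    exact_mod_cast show r.natDegree < (a (n+1)).natDegree by omega
  refine ⟨⟨n, ⟨r, hr0, hrdeg, hPr, hQr⟩, ?_⟩, part2⟩
  rintro m ⟨r', hr'0, hdeg', hP', hQ'⟩
  have h1 : Q.natDegree = r'.natDegree + (q m).natDegree := by
    rw [hQ']; exact Polynomial.natDegree_mul hr'0 (D.q_ne m)
  have h2 : r'.natDegree < (a (m+1)).natDegree := Polynomial.natDegree_lt_natDegree hr'0 hdeg'
  have h3 : (q (m+1)).natDegree = (a (m+1)).natDegree + (q m).natDegree := (D.q_facts m).2
  by_contra hne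
  rcases lt_or_gt_of_ne hne with hlt | hgt
  · have h4 : (q (m+1)).natDegree ≤ (q n).natDegree := D.q_mono.monotone (by omega)
    omega
  · have h4 : (q (n+1)).natDegree ≤ (q m).natDegree := D.q_mono.monotone (by omega)
    omega
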